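/- Fix 1 < p < ∞ and let f : ℝ → ℝ satisfy f(t) = t² for |t| ≤ 2. Then the map X ↦ f(1 + X) - f(1), defined on {X ∈ L^∞[0,1] : ‖X‖_∞ ≤ 1} ⊂ L^p[0,1] (where f is applied pointwise), is not Fréchet differentiable at 0 in the L^p norm; more precisely, there is no bounded linear map T : L^p[0,1] → L^p[0,1] with ‖f(1+X) - f(1) - T(X)‖_p = o(‖X‖_p) as ‖X‖_p → 0 over X with ‖X‖_∞ ≤ 1. -/

import Mathlib

open MeasureTheory Set ENNReal

/-- for f with f(t) = t² on |t| ≤ 2, the map X ↦ f(1+X) - f(1) is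
not Fréchet differentiable at 0 on L^p[0,1] along {‖X‖_∞ ≤ 1}: no bounded linear
map T : L^p → L^p satisfies ‖f(1+X) - f(1) - T X‖_p = o(‖X‖_p). -/
theorem no_frechet_derivative_on_Lp
    (p : ℝ) (hp : 1 < p) [Fact (1 ≤ ENNReal.ofReal p)]
    (f : ℝ → ℝ) (hf : ∀ t : ℝ, |t| ≤ 2 → f t = t ^ 2) :
    ¬ ∃ T : Lp ℝ (ENNReal.ofReal p) (volume.restrict (Set.Icc (0:ℝ) 1)) →L[ℝ]
          Lp ℝ (ENNReal.ofReal p) (volume.restrict (Set.Icc (0:ℝ) 1)),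
        ∀ c : ℝ, 0 < c → ∃ δ : ℝ, 0 < δ ∧
          ∀ X : ℝ → ℝ, (∀ t, |X t| ≤ 1) →
            ∀ hX : MemLp X (ENNReal.ofReal p) (volume.restrict (Set.Icc (0:ℝ) 1)),
            eLpNorm X (ENNReal.ofReal p) (volume.restrict (Set.Icc (0:ℝ) 1))
              < ENNReal.ofReal δ →
            eLpNorm
                (fun t => f (1 + X t) - f 1 -
                  (T (hX.toLp X) : ℝ → ℝ) t)
                (ENNReal.ofReal p) (volume.restrict (Set.Icc (0:ℝ) 1))
              ≤ ENNReal.ofReal c *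
                eLpNorm X (ENNReal.ofReal p) (volume.restrict (Set.Icc (0:ℝ) 1)) := by
  rintro ⟨T, hT⟩
  have hp0 : (0:ℝ) < p := lt_trans zero_lt_one hp
  have hq0 : ENNReal.ofReal p ≠ 0 := by
    simp [ENNReal.ofReal_eq_zero, not_le, hp0]
  have hqtop : ENNReal.ofReal p ≠ ⊤ := ENNReal.ofReal_ne_top
  have hqreal : (ENNReal.ofReal p).toReal = p := ENNReal.toReal_ofReal hp0.le
  obtain ⟨δ, hδ, H⟩ := hT (1/2) (by norm_num)
  set ε : ℝ := min (1/2) (δ ^ p / 2) with hεdef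
  have hδp : 0 < δ ^ p := Real.rpow_pos_of_pos hδ p
  have hε0 : 0 < ε := lt_min (by norm_num) (by positivity)
  have hε1 : ε ≤ 1 := le_trans (min_le_left _ _) (by norm_num)
  have hεδ : ε < δ ^ p := lt_of_le_of_lt (min_le_right _ _) (by linarith)
  set X : ℝ → ℝ := (Set.Icc (0:ℝ) ε).indicator (fun _ => (1:ℝ)) with hXdef
  have hmeas : MeasurableSet (Set.Icc (0:ℝ) ε) := measurableSet_Icc
  have hμε : (volume.restrict (Set.Icc (0:ℝ) 1)) (Set.Icc (0:ℝ) ε) = ENNReal.ofReal ε := by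
    rw [Measure.restrict_apply hmeas,
      Set.inter_eq_self_of_subset_left (Set.Icc_subset_Icc le_rfl hε1),
      Real.volume_Icc, sub_zero]
  have hX : MemLp X (ENNReal.ofReal p) (volume.restrict (Set.Icc (0:ℝ) 1)) := by
    apply memLp_indicator_const _ hmeas (1:ℝ) (Or.inr _)
    rw [hμε]; exact ENNReal.ofReal_ne_top
  have hXb : ∀ t, |X t| ≤ 1 := by
    intro t
    by_cases h : t ∈ Set.Icc (0:ℝ) ε <;> simp [hXdef, Set.indicator_apply, h]
  set N := eLpNorm X (ENNReal.ofReal p) (volume.restrict (Set.Icc (0:ℝ) 1)) with hN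
  have hNval : N = ENNReal.ofReal ε ^ (1 / p) := by
    rw [hN, hXdef, eLpNorm_indicator_const hmeas hq0 hqtop, hμε, hqreal]
    simp
  have hNpos : 0 < N := by
    rw [hNval]
    exact ENNReal.rpow_pos (by simpa [ENNReal.ofReal_pos] using hε0) ENNReal.ofReal_ne_top
  have hNtop : N ≠ ⊤ := hX.2.ne
  have hNδ : N < ENNReal.ofReal δ := by
    rw [hNval]
    calc ENNReal.ofReal ε ^ (1 / p)
        < ENNReal.ofReal (δ ^ p) ^ (1 / p) :=
          ENNReal.rpow_lt_rpow ((ENNReal.ofReal_lt_ofReal_iff hδp).mpr hεδ) (by positivity)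
      _ = ENNReal.ofReal δ := by
          rw [← ENNReal.ofReal_rpow_of_pos hδ, ← ENNReal.rpow_mul,
            mul_one_div_cancel hp0.ne', ENNReal.rpow_one]
  have hf1 : f 1 = 1 := by rw [hf 1 (by norm_num)]; norm_num
  have hfX : ∀ t, f (1 + X t) - f 1 = 3 * X t := by
    intro t
    by_cases h : t ∈ Set.Icc (0:ℝ) ε
    · simp only [hXdef, Set.indicator_of_mem h]
      rw [show (1:ℝ) + 1 = 2 by norm_num, hf 2 (by norm_num), hf1]; norm_num
    · simp only [hXdef, Set.indicator_of_notMem h]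
      rw [add_zero, hf1, mul_zero, sub_self]
  have hY : MemLp (-X) (ENNReal.ofReal p) (volume.restrict (Set.Icc (0:ℝ) 1)) := hX.neg
  have hYb : ∀ t, |(-X) t| ≤ 1 := by intro t; simpa using hXb t
  have hYN : eLpNorm (-X) (ENNReal.ofReal p) (volume.restrict (Set.Icc (0:ℝ) 1)) = N :=
    eLpNorm_neg X _ _
  have hfY : ∀ t, f (1 + (-X) t) - f 1 = - X t := by
    intro t
    by_cases h : t ∈ Set.Icc (0:ℝ) ε
    · simp only [hXdef, Pi.neg_apply, Set.indicator_of_mem h]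
      rw [show (1:ℝ) + -1 = 0 by norm_num, hf 0 (by norm_num), hf1]; norm_num
    · simp only [hXdef, Pi.neg_apply, Set.indicator_of_notMem h]
      norm_num [hf1]
  have hLneg : hY.toLp (-X) = -(hX.toLp X) := hX.toLp_neg
  set g : ℝ → ℝ := (T (hX.toLp X) : ℝ → ℝ) with hg
  have h1 := H X hXb hX hNδ
  have h2 := H (-X) hYb hY (by rwa [hYN])
  rw [hYN] at h2
  have h1' : eLpNorm (fun t => 3 * X t - g t) (ENNReal.ofReal p)
      (volume.restrict (Set.Icc (0:ℝ) 1)) ≤ ENNReal.ofReal (1/2) * N := by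
    have heq : (fun t => f (1 + X t) - f 1 - (T (hX.toLp X) : ℝ → ℝ) t)
        = fun t => 3 * X t - g t := by
      funext t; rw [hfX t]
    rwa [heq] at h1
  have h2' : eLpNorm (fun t => -X t + g t) (ENNReal.ofReal p)
      (volume.restrict (Set.Icc (0:ℝ) 1)) ≤ ENNReal.ofReal (1/2) * N := by
    refine le_trans (le_of_eq (eLpNorm_congr_ae ?_)) h2
    have hcoe : (T (hY.toLp (-X)) : ℝ → ℝ)
        =ᵐ[volume.restrict (Set.Icc (0:ℝ) 1)] fun t => -g t := by
      rw [hLneg, map_neg]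
      filter_upwards [Lp.coeFn_neg (T (hX.toLp X))] with t ht
      simpa [hg] using ht
    filter_upwards [hcoe] with t ht
    rw [hfY t, ht]
    ring
  have hAmeas : AEStronglyMeasurable (fun t => 3 * X t - g t)
      (volume.restrict (Set.Icc (0:ℝ) 1)) :=
    (hX.aestronglyMeasurable.const_mul 3).sub (Lp.aestronglyMeasurable (T (hX.toLp X)))
  have hBmeas : AEStronglyMeasurable (fun t => -X t + g t)
      (volume.restrict (Set.Icc (0:ℝ) 1)) :=
    hX.aestronglyMeasurable.neg.add (Lp.aestronglyMeasurable (T (hX.toLp X)))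
  have hsum : eLpNorm (fun t => 2 * X t) (ENNReal.ofReal p)
      (volume.restrict (Set.Icc (0:ℝ) 1)) ≤ N := by
    have heq : (fun t => 2 * X t)
        = (fun t => 3 * X t - g t) + (fun t => -X t + g t) := by
      funext t; simp only [Pi.add_apply]; ring
    calc eLpNorm (fun t => 2 * X t) (ENNReal.ofReal p) (volume.restrict (Set.Icc (0:ℝ) 1))
        ≤ eLpNorm (fun t => 3 * X t - g t) (ENNReal.ofReal p)
            (volume.restrict (Set.Icc (0:ℝ) 1))
          + eLpNorm (fun t => -X t + g t) (ENNReal.ofReal p)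
            (volume.restrict (Set.Icc (0:ℝ) 1)) := by
          rw [heq]; exact eLpNorm_add_le hAmeas hBmeas (Fact.out)
      _ ≤ ENNReal.ofReal (1/2) * N + ENNReal.ofReal (1/2) * N := add_le_add h1' h2'
      _ = N := by
          rw [← add_mul, ← ENNReal.ofReal_add (by norm_num) (by norm_num)]
          norm_num
  have h2N : eLpNorm (fun t => 2 * X t) (ENNReal.ofReal p)
      (volume.restrict (Set.Icc (0:ℝ) 1)) = 2 * N := by
    have heq : (fun t => 2 * X t) = (2:ℝ) • X := by funext t; simp
    rw [heq, eLpNorm_const_smul, hN]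
    congr 1
    simp [Real.enorm_eq_ofReal_abs]
  rw [h2N] at hsum
  have h21 : (2:ℝ≥0∞) ≤ 1 := by
    rwa [← ENNReal.mul_le_mul_iff_left hNpos.ne' hNtop, one_mul]
  norm_num at h21
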